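/- Selective PPT monotonicity of generalized Rains relative entropies: let 𝐃(ω‖τ) be a function of states ω and positive semidefinite operators τ, taking values in ℝ∪{+∞}, satisfying (i) the data-processing inequality 𝐃(ω‖τ) ≥ 𝐃(N(ω)‖N(τ)) for every completely positive trace-preserving map N, and (ii) the direct-sum inequality 𝐃(κ‖λ) ≥ D(p‖q) + ∑_x p(x) 𝐃(κ_x‖λ_x) for all classical–quantum κ = ∑_x p(x)|x⟩⟨x|⊗κ_x and λ = ∑_x q(x)|x⟩⟨x|⊗λ_x. Define 𝐑(ρ) = inf over states σ on H_A⊗H_B of [𝐃(ρ‖σ) + log₂‖(id⊗T)(σ)‖₁]. Then for every bipartite state ρ and every selective PPT operation {P_x}_x, with p(x) = Tr[P_x(ρ)] and ρ_x = P_x(ρ)/p(x), one has 𝐑(ρ) ≥ ∑_{x : p(x)>0} p(x) 𝐑(ρ_x). -/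

import Mathlib

open scoped Matrix Classical ComplexOrder

namespace RainsPaper

/-- Natural matrix logarithm of a Hermitian matrix via spectral decomposition
(with the convention `log 0 = 0` on the kernel); junk value `0` otherwise. -/
noncomputable def matLog {n : Type} [Fintype n] [DecidableEq n] (A : Matrix n n ℂ) :
    Matrix n n ℂ :=
  if hA : A.IsHermitian then
    (hA.eigenvectorUnitary : Matrix n n ℂ) *
      (Matrix.diagonal fun i => (Real.log (hA.eigenvalues i) : ℂ)) *
      (star (hA.eigenvectorUnitary : Matrix n n ℂ))
  else 0

/-- Real power of a Hermitian matrix via spectral decomposition (with the convention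
`0 ^ r = 0` for `r ≠ 0`, so negative powers are taken on the support);
junk value `0` otherwise. -/
noncomputable def matPow {n : Type} [Fintype n] [DecidableEq n] (A : Matrix n n ℂ) (r : ℝ) :
    Matrix n n ℂ :=
  if hA : A.IsHermitian then
    (hA.eigenvectorUnitary : Matrix n n ℂ) *
      (Matrix.diagonal fun i => ((hA.eigenvalues i ^ r : ℝ) : ℂ)) *
      (star (hA.eigenvectorUnitary : Matrix n n ℂ))
  else 0

/-- A state is a positive semidefinite operator with unit trace. -/
def IsState {n : Type} [Fintype n] (ρ : Matrix n n ℂ) : Prop :=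
  ρ.PosSemidef ∧ ρ.trace = 1

/-- `supp ω ⊆ supp τ`, expressed (for Hermitian matrices) as `ker τ ⊆ ker ω`. -/
def SuppSubset {n : Type} [Fintype n] (ω τ : Matrix n n ℂ) : Prop :=
  ∀ v : n → ℂ, τ.mulVec v = 0 → ω.mulVec v = 0

/-- Trace norm `‖X‖₁ = Tr √(X†X)`. -/
noncomputable def traceNorm {n : Type} [Fintype n] [DecidableEq n] (X : Matrix n n ℂ) : ℝ :=
  ((matPow (Xᴴ * X) 2⁻¹).trace).re

/-- Fidelity `F(ω,τ) = ‖√ω √τ‖₁²`. -/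
noncomputable def fidelity {n : Type} [Fintype n] [DecidableEq n] (ω τ : Matrix n n ℂ) : ℝ :=
  (traceNorm (matPow ω 2⁻¹ * matPow τ 2⁻¹)) ^ 2

/-- Extended base-2 logarithm: `elog2 x = log₂ x` for `x > 0` and `-∞` for `x ≤ 0`. -/
noncomputable def elog2 (x : ℝ) : EReal :=
  if x ≤ 0 then ⊥ else ((Real.logb 2 x : ℝ) : EReal)

/-- Quantum relative entropy `D(ω‖τ) = Tr[ω (log₂ ω - log₂ τ)]` if `supp ω ⊆ supp τ`,
and `+∞` otherwise. -/
noncomputable def qRelEnt {n : Type} [Fintype n] [DecidableEq n] (ω τ : Matrix n n ℂ) : EReal :=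
  if SuppSubset ω τ then
    ((((ω * (matLog ω - matLog τ)).trace).re / Real.log 2 : ℝ) : EReal)
  else ⊤

/-- Sandwiched Rényi relative entropy
`D̃_α(ω‖τ) = (α-1)⁻¹ log₂ Tr[(τ^{(1-α)/(2α)} ω τ^{(1-α)/(2α)})^α]` when `α ∈ (0,1)`, or
`α > 1` and `supp ω ⊆ supp τ`; `+∞` otherwise. -/
noncomputable def sandRenyi {n : Type} [Fintype n] [DecidableEq n] (α : ℝ)
    (ω τ : Matrix n n ℂ) : EReal :=
  if (0 < α ∧ α < 1) ∨ (1 < α ∧ SuppSubset ω τ) then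
    (((α - 1)⁻¹ : ℝ) : EReal) *
      elog2 (((matPow (matPow τ ((1 - α) / (2 * α)) * ω * matPow τ ((1 - α) / (2 * α))) α).trace).re)
  else ⊤

/-- Petz Rényi relative entropy `D_α(ω‖τ) = (α-1)⁻¹ log₂ Tr[ω^α τ^{1-α}]` when `α ∈ (0,1)`,
or `α > 1` and `supp ω ⊆ supp τ`; `+∞` otherwise. -/
noncomputable def petzRenyi {n : Type} [Fintype n] [DecidableEq n] (α : ℝ)
    (ω τ : Matrix n n ℂ) : EReal :=
  if (0 < α ∧ α < 1) ∨ (1 < α ∧ SuppSubset ω τ) then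
    (((α - 1)⁻¹ : ℝ) : EReal) * elog2 (((matPow ω α * matPow τ (1 - α)).trace).re)
  else ⊤

/-- Geometric Rényi relative entropy `D̂_α(ω‖τ) = (α-1)⁻¹ log₂ Tr[τ (τ^{-1/2} ω τ^{-1/2})^α]`
(inverses on the support) when `α ∈ (0,1)`, or `α > 1` and `supp ω ⊆ supp τ`; `+∞` otherwise. -/
noncomputable def geomRenyi {n : Type} [Fintype n] [DecidableEq n] (α : ℝ)
    (ω τ : Matrix n n ℂ) : EReal :=
  if (0 < α ∧ α < 1) ∨ (1 < α ∧ SuppSubset ω τ) then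
    (((α - 1)⁻¹ : ℝ) : EReal) *
      elog2 (((τ * matPow (matPow τ (-2⁻¹) * ω * matPow τ (-2⁻¹)) α).trace).re)
  else ⊤

/-- Classical relative entropy `D(p‖q)`, equal to `+∞` unless `supp p ⊆ supp q`
(terms with `p x = 0` contribute zero). -/
noncomputable def cRelEnt {X : Type} [Fintype X] (p q : X → ℝ) : EReal :=
  if ∀ x, p x ≠ 0 → q x ≠ 0 then
    ((∑ x, p x * Real.logb 2 (p x / q x) : ℝ) : EReal)
  else ⊤

/-- `p` is a probability distribution on the finite set `X`. -/
def IsProb {X : Type} [Fintype X] (p : X → ℝ) : Prop :=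
  (∀ x, 0 ≤ p x) ∧ ∑ x, p x = 1

/-- The classical–quantum operator `∑ x p(x) |x⟩⟨x| ⊗ K x`. -/
noncomputable def cqOp {X A : Type} [DecidableEq X] (p : X → ℝ)
    (K : X → Matrix A A ℂ) : Matrix (X × A) (X × A) ℂ :=
  Matrix.of fun a b => if a.1 = b.1 then (p a.1 : ℂ) * K a.1 a.2 b.2 else 0

/-- Partial transpose (on the second tensor factor):
`(id ⊗ T)(X)_{(i,k),(j,l)} = X_{(i,l),(j,k)}`. -/
def ptrans {a b : Type} (X : Matrix (a × b) (a × b) ℂ) : Matrix (a × b) (a × b) ℂ :=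
  Matrix.of fun p q => X (p.1, q.2) (q.1, p.2)

/-- The partial transpose as a linear map. -/
def ptransL {a b : Type} : Matrix (a × b) (a × b) ℂ →ₗ[ℂ] Matrix (a × b) (a × b) ℂ where
  toFun := ptrans
  map_add' _ _ := rfl
  map_smul' _ _ := rfl

/-- `PPT'` : positive semidefinite bipartite operators whose partial transpose has
trace norm at most 1. -/
def PPTprime {a b : Type} [Fintype a] [Fintype b] [DecidableEq a] [DecidableEq b]
    (σ : Matrix (a × b) (a × b) ℂ) : Prop :=
  σ.PosSemidef ∧ traceNorm (ptrans σ) ≤ 1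

/-- The Rains relative entropy `R(ρ) = inf_{σ ∈ PPT'} D(ρ‖σ)`. -/
noncomputable def Rains {a b : Type} [Fintype a] [Fintype b] [DecidableEq a] [DecidableEq b]
    (ρ : Matrix (a × b) (a × b) ℂ) : EReal :=
  ⨅ σ : {σ : Matrix (a × b) (a × b) ℂ // PPTprime σ}, qRelEnt ρ σ.1

/-- The sandwiched Rényi Rains relative entropy `R̃_α(ρ) = inf_{σ ∈ PPT'} D̃_α(ρ‖σ)`. -/
noncomputable def sandRains {a b : Type} [Fintype a] [Fintype b] [DecidableEq a] [DecidableEq b]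
    (α : ℝ) (ρ : Matrix (a × b) (a × b) ℂ) : EReal :=
  ⨅ σ : {σ : Matrix (a × b) (a × b) ℂ // PPTprime σ}, sandRenyi α ρ σ.1

/-- The extension `id_{Fin k} ⊗ Φ` of a linear map on matrices. -/
def matExt {n m : Type} [Fintype n] [Fintype m]
    (Φ : Matrix n n ℂ →ₗ[ℂ] Matrix m m ℂ) (k : ℕ)
    (X : Matrix (Fin k × n) (Fin k × n) ℂ) : Matrix (Fin k × m) (Fin k × m) ℂ :=
  Matrix.of fun p q => Φ (Matrix.of fun i j => X (p.1, i) (q.1, j)) p.2 q.2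

/-- Complete positivity: all extensions `id_k ⊗ Φ` preserve positive semidefiniteness. -/
def IsCP {n m : Type} [Fintype n] [Fintype m]
    (Φ : Matrix n n ℂ →ₗ[ℂ] Matrix m m ℂ) : Prop :=
  ∀ (k : ℕ) (X : Matrix (Fin k × n) (Fin k × n) ℂ), X.PosSemidef → (matExt Φ k X).PosSemidef

/-- Trace preservation. -/
def IsTP {n m : Type} [Fintype n] [Fintype m]
    (Φ : Matrix n n ℂ →ₗ[ℂ] Matrix m m ℂ) : Prop :=
  ∀ X : Matrix n n ℂ, (Φ X).trace = X.trace

/-- A selective PPT operation: a family of completely positive maps `P x` such that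
`(id ⊗ T) ∘ P x ∘ (id ⊗ T)` is completely positive for every `x` and `∑ x, P x` is
trace preserving. -/
def IsSelectivePPT {a b a' b' X : Type} [Fintype a] [Fintype b] [Fintype a'] [Fintype b']
    [Fintype X]
    (P : X → (Matrix (a × b) (a × b) ℂ →ₗ[ℂ] Matrix (a' × b') (a' × b') ℂ)) : Prop :=
  (∀ x, IsCP (P x)) ∧ (∀ x, IsCP (ptransL ∘ₗ P x ∘ₗ ptransL)) ∧
    (∀ ρ : Matrix (a × b) (a × b) ℂ, ∑ x, ((P x) ρ).trace = ρ.trace)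

/-- The maximally entangled state `Φ^d = |Φ^d⟩⟨Φ^d|`, `|Φ^d⟩ = d^{-1/2} ∑ i |i⟩|i⟩`. -/
noncomputable def maxEnt (d : ℕ) : Matrix (Fin d × Fin d) (Fin d × Fin d) ℂ :=
  Matrix.of fun p q => if p.1 = p.2 ∧ q.1 = q.2 then ((d : ℂ))⁻¹ else 0

/-- Binary entropy `h₂(ε) = -ε log₂ ε - (1-ε) log₂ (1-ε)`. -/
noncomputable def h2 (ε : ℝ) : ℝ :=
  -ε * Real.logb 2 ε - (1 - ε) * Real.logb 2 (1 - ε)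



section Helpers

open Matrix Complex

variable {n : Type} [Fintype n] [DecidableEq n]

lemma psd_apply_self_re {A : Matrix n n ℂ} (hA : A.PosSemidef) (i : n) :
    A i i = ((A i i).re : ℂ) ∧ 0 ≤ (A i i).re := by
  have h := hA.dotProduct_mulVec_nonneg (Pi.single i 1)
  have he : star (Pi.single i 1 : n → ℂ) ⬝ᵥ A *ᵥ (Pi.single i 1) = A i i := by
    simp [dotProduct, Matrix.mulVec, Pi.single_apply, Pi.star_apply, mul_ite,
      Finset.sum_ite_eq, Finset.sum_ite_eq']
  rw [he, Complex.le_def] at h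
  refine ⟨Complex.ext rfl ?_, ?_⟩
  · simpa using h.2.symm
  · simpa using h.1

lemma psd_trace_re {A : Matrix n n ℂ} (hA : A.PosSemidef) :
    A.trace = ((A.trace.re : ℝ) : ℂ) ∧ 0 ≤ A.trace.re := by
  have him : A.trace.im = 0 := by
    rw [Matrix.trace, Complex.im_sum]
    refine Finset.sum_eq_zero fun i _ => ?_
    have := (psd_apply_self_re hA i).1
    rw [Matrix.diag_apply, this]
    simp
  have hre : 0 ≤ A.trace.re := by
    rw [Matrix.trace, Complex.re_sum]
    exact Finset.sum_nonneg fun i _ => (psd_apply_self_re hA i).2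
  exact ⟨Complex.ext rfl (by simpa using him), hre⟩

open scoped MatrixOrder in
lemma psd_eq_zero_of_trace_re {A : Matrix n n ℂ} (hA : A.PosSemidef)
    (h : A.trace.re = 0) : A = 0 := by
  obtain ⟨B, hB'⟩ := CStarAlgebra.nonneg_iff_eq_star_mul_self.mp hA.nonneg
  rw [Matrix.star_eq_conjTranspose] at hB'
  subst hB'
  have hB : B = 0 := by
    have htr : (Bᴴ * B).trace.re = ∑ i : n, ∑ k : n, Complex.normSq (B k i) := by
      rw [Matrix.trace, Complex.re_sum]
      refine Finset.sum_congr rfl fun i _ => ?_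
      rw [Matrix.diag_apply, Matrix.mul_apply, Complex.re_sum]
      refine Finset.sum_congr rfl fun k _ => ?_
      simp [Matrix.conjTranspose_apply, Complex.normSq_apply, Complex.mul_re]
    rw [htr] at h
    have hz := (Finset.sum_eq_zero_iff_of_nonneg
      (fun i _ => Finset.sum_nonneg fun k _ => Complex.normSq_nonneg _)).mp h
    ext k i
    have := (Finset.sum_eq_zero_iff_of_nonneg
      (fun k _ => Complex.normSq_nonneg _)).mp (hz i (Finset.mem_univ i)) k (Finset.mem_univ k)
    simpa using Complex.normSq_eq_zero.mp this
  rw [hB]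
  simp

lemma herm_trace_eq_sum_eigenvalues {A : Matrix n n ℂ} (hA : A.IsHermitian) :
    A.trace = ∑ i : n, ((hA.eigenvalues i : ℝ) : ℂ) := by
  conv_lhs => rw [hA.spectral_theorem, Unitary.conjStarAlgAut_apply]
  rw [Matrix.trace_mul_cycle,
    (Matrix.mem_unitaryGroup_iff').mp (hA.eigenvectorUnitary).2, Matrix.one_mul,
    Matrix.trace_diagonal]
  rfl

lemma psd_smul_real {A : Matrix n n ℂ} (hA : A.PosSemidef) {c : ℝ} (hc : 0 ≤ c) :
    ((c : ℝ) • A).PosSemidef := by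
  have he : (c : ℝ) • A = ((c : ℂ)) • A := by
    ext i j; simp [Complex.real_smul]
  rw [he]
  refine Matrix.posSemidef_iff_dotProduct_mulVec.mpr ⟨?_, ?_⟩
  · rw [Matrix.IsHermitian, Matrix.conjTranspose_smul, hA.1.eq]
    simp
  · intro v
    rw [Matrix.smul_mulVec, dotProduct_smul, smul_eq_mul]
    exact mul_nonneg (by simpa [Complex.le_def] using hc) (hA.dotProduct_mulVec_nonneg v)

section hfunsec

variable {A : Matrix n n ℂ} (hA : A.IsHermitian)

/-- `U * diagonal f * U⋆` for the eigenvector unitary of `hA`. -/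
noncomputable def hfun (f : n → ℝ) : Matrix n n ℂ :=
  (hA.eigenvectorUnitary : Matrix n n ℂ) * Matrix.diagonal (fun i => ((f i : ℝ) : ℂ)) *
    star (hA.eigenvectorUnitary : Matrix n n ℂ)

lemma hfun_mul (f g : n → ℝ) : hfun hA f * hfun hA g = hfun hA (fun i => f i * g i) := by
  unfold hfun
  have hU : star (hA.eigenvectorUnitary : Matrix n n ℂ) * (hA.eigenvectorUnitary : Matrix n n ℂ)
      = 1 := (Matrix.mem_unitaryGroup_iff').mp (hA.eigenvectorUnitary).2
  calc _ = (hA.eigenvectorUnitary : Matrix n n ℂ) * (Matrix.diagonal (fun i => ((f i : ℝ) : ℂ)) *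
        (star (hA.eigenvectorUnitary : Matrix n n ℂ) * (hA.eigenvectorUnitary : Matrix n n ℂ)) *
        Matrix.diagonal (fun i => ((g i : ℝ) : ℂ))) * star (hA.eigenvectorUnitary : Matrix n n ℂ) := by
        simp only [Matrix.mul_assoc]
    _ = _ := by
        rw [hU, Matrix.mul_one, Matrix.diagonal_mul_diagonal]
        simp [Complex.ofReal_mul]

lemma hfun_psd (f : n → ℝ) (hf : ∀ i, 0 ≤ f i) : (hfun hA f).PosSemidef := by
  unfold hfun
  have hd : (Matrix.diagonal fun i => ((f i : ℝ) : ℂ)).PosSemidef :=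
    Matrix.posSemidef_diagonal_iff.mpr fun i => by
      simp [Complex.le_def, hf i]
  simpa [Matrix.star_eq_conjTranspose] using
    hd.mul_mul_conjTranspose_same (hA.eigenvectorUnitary : Matrix n n ℂ)

lemma hfun_trace (f : n → ℝ) : (hfun hA f).trace = ((∑ i, f i : ℝ) : ℂ) := by
  unfold hfun
  rw [Matrix.trace_mul_cycle,
    (Matrix.mem_unitaryGroup_iff').mp (hA.eigenvectorUnitary).2, Matrix.one_mul,
    Matrix.trace_diagonal]
  simp

lemma hfun_sub (f g : n → ℝ) : hfun hA f - hfun hA g = hfun hA (fun i => f i - g i) := by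
  unfold hfun
  have hd : (Matrix.diagonal fun i => ((f i : ℝ) : ℂ)) - (Matrix.diagonal fun i => ((g i : ℝ) : ℂ))
      = Matrix.diagonal fun i => ((f i - g i : ℝ) : ℂ) := by
    rw [Matrix.diagonal_sub]
    congr 1
    funext i
    push_cast
    ring
  rw [← Matrix.sub_mul, ← Matrix.mul_sub, hd]

lemma hfun_eigen : hfun hA hA.eigenvalues = A := by
  unfold hfun
  exact hA.spectral_theorem.symm

lemma conj_spectral : star (hA.eigenvectorUnitary : Matrix n n ℂ) * A *
    (hA.eigenvectorUnitary : Matrix n n ℂ) =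
    Matrix.diagonal (fun i => ((hA.eigenvalues i : ℝ) : ℂ)) := by
  have hU : star (hA.eigenvectorUnitary : Matrix n n ℂ) * (hA.eigenvectorUnitary : Matrix n n ℂ)
      = 1 := (Matrix.mem_unitaryGroup_iff').mp (hA.eigenvectorUnitary).2
  have h := congrArg (fun M => star (hA.eigenvectorUnitary : Matrix n n ℂ) * M *
    (hA.eigenvectorUnitary : Matrix n n ℂ)) hA.spectral_theorem
  simp only [Unitary.conjStarAlgAut_apply, Unitary.coe_star] at h
  rw [h]
  calc _ = (star (hA.eigenvectorUnitary : Matrix n n ℂ) * (hA.eigenvectorUnitary : Matrix n n ℂ)) *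
      (Matrix.diagonal (RCLike.ofReal ∘ hA.eigenvalues) *
      ((star (hA.eigenvectorUnitary : Matrix n n ℂ)) * (hA.eigenvectorUnitary : Matrix n n ℂ))) := by
        simp only [Matrix.mul_assoc]
    _ = _ := by rw [hU]; simp only [Matrix.one_mul, Matrix.mul_one]; rfl

lemma trace_conj {U S : Matrix n n ℂ} (hU : U * star U = 1) :
    (star U * S * U).trace = S.trace := by
  rw [Matrix.trace_mul_cycle, hU, Matrix.one_mul]

end hfunsec

lemma matPow_psd {A : Matrix n n ℂ} (hA : A.PosSemidef) (r : ℝ) :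
    (matPow A r).PosSemidef := by
  rw [matPow, dif_pos hA.1]
  exact hfun_psd hA.1 (fun i => hA.1.eigenvalues i ^ r)
    (fun i => Real.rpow_nonneg (hA.eigenvalues_nonneg i) r)

lemma matPow_half_mul_self {A : Matrix n n ℂ} (hA : A.PosSemidef) :
    matPow A 2⁻¹ * matPow A 2⁻¹ = A := by
  rw [matPow, dif_pos hA.1]
  have := hfun_mul hA.1 (fun i => hA.1.eigenvalues i ^ (2⁻¹ : ℝ))
    (fun i => hA.1.eigenvalues i ^ (2⁻¹ : ℝ))
  rw [hfun] at this
  rw [this]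
  have he : (fun i => hA.1.eigenvalues i ^ (2⁻¹ : ℝ) * hA.1.eigenvalues i ^ (2⁻¹ : ℝ))
      = hA.1.eigenvalues := by
    funext i
    rw [← Real.rpow_add' (hA.eigenvalues_nonneg i) (by norm_num)]
    norm_num
  rw [he, hfun_eigen]

open scoped MatrixOrder in
lemma traceNorm_eq_of_sq {X B : Matrix n n ℂ} (hB : B.PosSemidef)
    (h : B * B = Xᴴ * X) : traceNorm X = B.trace.re := by
  have hP : (Xᴴ * X).PosSemidef := Matrix.posSemidef_conjTranspose_mul_self X
  have h1 : matPow (Xᴴ * X) 2⁻¹ = B :=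
    (CFC.sq_eq_sq_iff _ _ (matPow_psd hP 2⁻¹).nonneg hB.nonneg).mp
      (by rw [pow_two, pow_two, matPow_half_mul_self hP, h])
  rw [traceNorm, h1]

lemma traceNorm_psd {A : Matrix n n ℂ} (hA : A.PosSemidef) : traceNorm A = A.trace.re :=
  traceNorm_eq_of_sq hA (by rw [hA.1.eq])

lemma traceNorm_herm {A : Matrix n n ℂ} (hA : A.IsHermitian) :
    traceNorm A = ∑ i, |hA.eigenvalues i| := by
  have hB : (hfun hA (fun i => |hA.eigenvalues i|)).PosSemidef :=
    hfun_psd hA _ (fun i => abs_nonneg _)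
  have hsq : hfun hA (fun i => |hA.eigenvalues i|) * hfun hA (fun i => |hA.eigenvalues i|)
      = Aᴴ * A := by
    rw [hfun_mul, hA.eq]
    have : (fun i => |hA.eigenvalues i| * |hA.eigenvalues i|)
        = (fun i => hA.eigenvalues i * hA.eigenvalues i) := by
      funext i; rw [← abs_mul, abs_mul_self]
    rw [this, ← hfun_mul, hfun_eigen]
  rw [traceNorm_eq_of_sq hB hsq, hfun_trace]
  simp

lemma traceNorm_herm_ge_trace_re {A : Matrix n n ℂ} (hA : A.IsHermitian) :
    A.trace.re ≤ traceNorm A := by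
  rw [traceNorm_herm hA]
  have := herm_trace_eq_sum_eigenvalues hA
  have hre : A.trace.re = ∑ i, hA.eigenvalues i := by
    rw [this, Complex.re_sum]; simp
  rw [hre]
  exact Finset.sum_le_sum fun i _ => le_abs_self _

lemma traceNorm_sub_psd_le {S T : Matrix n n ℂ} (hS : S.PosSemidef) (hT : T.PosSemidef) :
    traceNorm (S - T) ≤ S.trace.re + T.trace.re := by
  have hK : (S - T).IsHermitian := hS.1.sub hT.1
  have hU2 : (hK.eigenvectorUnitary : Matrix n n ℂ) *
      star (hK.eigenvectorUnitary : Matrix n n ℂ) = 1 :=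
    (Matrix.mem_unitaryGroup_iff).mp (hK.eigenvectorUnitary).2
  set U : Matrix n n ℂ := (hK.eigenvectorUnitary : Matrix n n ℂ) with hUdef
  have hSU : (star U * S * U).PosSemidef := by
    simpa [Matrix.star_eq_conjTranspose] using hS.conjTranspose_mul_mul_same U
  have hTU : (star U * T * U).PosSemidef := by
    simpa [Matrix.star_eq_conjTranspose] using hT.conjTranspose_mul_mul_same U
  have hdiag : star U * (S - T) * U
      = Matrix.diagonal (fun i => ((hK.eigenvalues i : ℝ) : ℂ)) := conj_spectral hK
  have hsplit : star U * (S - T) * U = star U * S * U - star U * T * U := by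
    rw [Matrix.mul_sub, Matrix.sub_mul]
  have hentry : ∀ i, hK.eigenvalues i = ((star U * S * U) i i).re - ((star U * T * U) i i).re := by
    intro i
    have h1 : ((star U * (S - T) * U) i i) = ((hK.eigenvalues i : ℝ) : ℂ) := by
      rw [hdiag]; simp
    rw [hsplit] at h1
    have := congrArg Complex.re h1
    simpa [Matrix.sub_apply] using this.symm
  rw [traceNorm_herm hK]
  have hbound : ∀ i, |hK.eigenvalues i| ≤ ((star U * S * U) i i).re + ((star U * T * U) i i).re := by
    intro i
    rw [hentry i]
    refine (abs_sub _ _).trans ?_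
    rw [_root_.abs_of_nonneg (psd_apply_self_re hSU i).2,
      _root_.abs_of_nonneg (psd_apply_self_re hTU i).2]
  calc ∑ i, |hK.eigenvalues i|
      ≤ ∑ i, (((star U * S * U) i i).re + ((star U * T * U) i i).re) :=
        Finset.sum_le_sum fun i _ => hbound i
    _ = (star U * S * U).trace.re + (star U * T * U).trace.re := by
        rw [Finset.sum_add_distrib, Matrix.trace, Matrix.trace, Complex.re_sum, Complex.re_sum]
        rfl
    _ = S.trace.re + T.trace.re := by
        rw [trace_conj hU2, trace_conj hU2]

lemma exists_psd_decomp {A : Matrix n n ℂ} (hA : A.IsHermitian) :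
    ∃ S T : Matrix n n ℂ, S.PosSemidef ∧ T.PosSemidef ∧ A = S - T ∧
      traceNorm A = S.trace.re + T.trace.re := by
  refine ⟨hfun hA (fun i => max (hA.eigenvalues i) 0),
    hfun hA (fun i => max (hA.eigenvalues i) 0 - hA.eigenvalues i), ?_, ?_, ?_, ?_⟩
  · exact hfun_psd hA _ fun i => le_max_right _ _
  · exact hfun_psd hA _ fun i => by simp [sub_nonneg, le_max_left]
  · rw [hfun_sub]
    have : (fun i => max (hA.eigenvalues i) 0 - (max (hA.eigenvalues i) 0 - hA.eigenvalues i))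
        = hA.eigenvalues := by funext i; ring
    rw [this, hfun_eigen]
  · rw [traceNorm_herm hA, hfun_trace, hfun_trace]
    simp only [Complex.ofReal_re]
    rw [← Finset.sum_add_distrib]
    refine Finset.sum_congr rfl fun i _ => ?_
    rcases le_or_gt (hA.eigenvalues i) 0 with h | h
    · rw [abs_of_nonpos h, max_eq_right h]; ring
    · rw [abs_of_pos h, max_eq_left h.le]; ring

lemma traceNorm_smul_nonneg {X : Matrix n n ℂ} {c : ℝ} (hc : 0 ≤ c) :
    traceNorm ((c : ℝ) • X) = c * traceNorm X := by
  have hP : (Xᴴ * X).PosSemidef := Matrix.posSemidef_conjTranspose_mul_self X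
  have hB : (matPow (Xᴴ * X) 2⁻¹).PosSemidef := matPow_psd hP 2⁻¹
  have h0 : traceNorm X = (matPow (Xᴴ * X) 2⁻¹).trace.re :=
    traceNorm_eq_of_sq hB (matPow_half_mul_self hP)
  have hsq : ((c : ℝ) • matPow (Xᴴ * X) 2⁻¹) * ((c : ℝ) • matPow (Xᴴ * X) 2⁻¹)
      = ((c : ℝ) • X)ᴴ * ((c : ℝ) • X) := by
    rw [Matrix.conjTranspose_smul]
    rw [Matrix.smul_mul, Matrix.mul_smul, Matrix.smul_mul, Matrix.mul_smul,
      matPow_half_mul_self hP]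
    simp
  have := traceNorm_eq_of_sq (psd_smul_real hB hc) hsq
  rw [this, Matrix.trace_smul]
  rw [h0]
  simp [Complex.real_smul]

end Helpers

section CPBasics

open Matrix Complex

variable {m l : Type} [Fintype m] [Fintype l] [DecidableEq m] [DecidableEq l]

lemma IsCP.psd_map {Φ : Matrix m m ℂ →ₗ[ℂ] Matrix l l ℂ} (hΦ : IsCP Φ)
    {R : Matrix m m ℂ} (hR : R.PosSemidef) : (Φ R).PosSemidef := by
  have hX : (R.submatrix (Prod.snd : Fin 1 × m → m) (Prod.snd)).PosSemidef :=
    hR.submatrix _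
  have h1 := hΦ 1 _ hX
  have h2 : matExt Φ 1 (R.submatrix Prod.snd Prod.snd)
      = (Φ R).submatrix (Prod.snd : Fin 1 × l → l) (Prod.snd) := by
    ext p q
    simp only [matExt, Matrix.of_apply, Matrix.submatrix_apply]
    congr 1
  rw [h2] at h1
  have h3 := h1.submatrix (fun j : l => ((0 : Fin 1), j))
  have h4 : ((Φ R).submatrix (Prod.snd : Fin 1 × l → l) Prod.snd).submatrix
      (fun j : l => ((0 : Fin 1), j)) (fun j : l => ((0 : Fin 1), j)) = Φ R :=
    Matrix.ext fun i j => rfl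
  rwa [h4] at h3

lemma IsCP.herm_map {Φ : Matrix m m ℂ →ₗ[ℂ] Matrix l l ℂ} (hΦ : IsCP Φ)
    {R : Matrix m m ℂ} (hR : R.IsHermitian) : (Φ R).IsHermitian := by
  obtain ⟨S, T, hS, hT, hST, -⟩ := exists_psd_decomp hR
  rw [hST, map_sub]
  exact ((hΦ.psd_map hS).1).sub ((hΦ.psd_map hT).1)

end CPBasics

section PtransBasics

variable {a b : Type} [Fintype a] [Fintype b] [DecidableEq a] [DecidableEq b]

lemma ptrans_ptrans (M : Matrix (a × b) (a × b) ℂ) : ptrans (ptrans M) = M := by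
  ext ⟨i, k⟩ ⟨j, l⟩
  rfl

lemma ptrans_trace (M : Matrix (a × b) (a × b) ℂ) : (ptrans M).trace = M.trace := by
  rw [Matrix.trace, Matrix.trace]
  refine Finset.sum_congr rfl fun p _ => ?_
  rcases p with ⟨i, k⟩
  rfl

lemma ptrans_isHermitian {M : Matrix (a × b) (a × b) ℂ} (hM : M.IsHermitian) :
    (ptrans M).IsHermitian := by
  ext ⟨i, k⟩ ⟨j, l⟩
  rw [Matrix.conjTranspose_apply]
  show (starRingEnd ℂ) (ptrans M (j, l) (i, k)) = _
  have : ptrans M (j, l) (i, k) = M (j, k) (i, l) := rfl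
  rw [this]
  have h2 : (starRingEnd ℂ) (M (j, k) (i, l)) = Mᴴ (i, l) (j, k) := rfl
  rw [h2, hM.eq]
  rfl

end PtransBasics

section NmapSec

open Matrix Complex

variable {M C X : Type} [Fintype M] [Fintype C] [Fintype X] [DecidableEq M] [DecidableEq C]

/-- The flagged map `ω ↦ ∑ x |x⟩⟨x| ⊗ P x ω`. -/
noncomputable def Nmap (P : X → (Matrix M M ℂ →ₗ[ℂ] Matrix C C ℂ)) :
    Matrix M M ℂ →ₗ[ℂ] Matrix (X × C) (X × C) ℂ where
  toFun ω := Matrix.of fun p q => if p.1 = q.1 then (P p.1 ω) p.2 q.2 else 0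
  map_add' ω₁ ω₂ := by
    ext p q
    by_cases h : p.1 = q.1 <;> simp [h]
  map_smul' c ω := by
    ext p q
    by_cases h : p.1 = q.1 <;> simp [h]

lemma Nmap_apply (P : X → (Matrix M M ℂ →ₗ[ℂ] Matrix C C ℂ)) (ω : Matrix M M ℂ)
    (p q : X × C) :
    Nmap P ω p q = if p.1 = q.1 then (P p.1 ω) p.2 q.2 else 0 := rfl

lemma Nmap_trace (P : X → (Matrix M M ℂ →ₗ[ℂ] Matrix C C ℂ)) (ω : Matrix M M ℂ) :
    (Nmap P ω).trace = ∑ x, (P x ω).trace := by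
  rw [Matrix.trace, Fintype.sum_prod_type]
  refine Finset.sum_congr rfl fun x _ => ?_
  rw [Matrix.trace]
  refine Finset.sum_congr rfl fun c _ => ?_
  simp [Matrix.diag_apply, Nmap_apply]

lemma Nmap_isCP {P : X → (Matrix M M ℂ →ₗ[ℂ] Matrix C C ℂ)} (hP : ∀ x, IsCP (P x)) :
    IsCP (Nmap P) := by
  intro k X0 hX0
  have hY : ∀ x, (matExt (P x) k X0).PosSemidef := fun x => hP x k X0 hX0
  have hZ : ∀ (p q : Fin k × (X × C)), matExt (Nmap P) k X0 p q
      = if p.2.1 = q.2.1 then matExt (P p.2.1) k X0 (p.1, p.2.2) (q.1, q.2.2) else 0 := by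
    intro p q
    simp only [matExt, Matrix.of_apply, Nmap_apply]
  refine Matrix.posSemidef_iff_dotProduct_mulVec.mpr ⟨?_, ?_⟩
  · ext ⟨i, x, c⟩ ⟨j, y, d⟩
    rw [Matrix.conjTranspose_apply, hZ, hZ]
    by_cases h : x = y
    · subst h
      have hs : star (matExt (P x) k X0 (j, d) (i, c)) = matExt (P x) k X0 (i, c) (j, d) := by
        rw [← Matrix.conjTranspose_apply, (hY x).1.eq]
      simp only [eq_self_iff_true, if_true]
      exact hs
    · rw [if_neg (fun hh => h hh.symm), if_neg h]
      simp
  · intro v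
    have key : star v ⬝ᵥ (matExt (Nmap P) k X0) *ᵥ v
        = ∑ x : X, star (fun ic : Fin k × C => v (ic.1, (x, ic.2))) ⬝ᵥ
            (matExt (P x) k X0) *ᵥ (fun ic : Fin k × C => v (ic.1, (x, ic.2))) := by
      simp only [dotProduct, Matrix.mulVec, hZ, Pi.star_apply,
        Fintype.sum_prod_type, ite_mul, zero_mul, mul_ite, mul_zero]
      rw [Finset.sum_comm]
      refine Finset.sum_congr rfl fun x _ => ?_
      refine Finset.sum_congr rfl fun i _ => ?_
      refine Finset.sum_congr rfl fun c _ => ?_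
      congr 1
      refine Finset.sum_congr rfl fun j _ => ?_
      rw [Finset.sum_comm]
      simp
    rw [key]
    exact Finset.sum_nonneg fun x _ => (hY x).dotProduct_mulVec_nonneg _

end NmapSec

section LogIneq

lemma log_sum_ineq {X : Type} [Fintype X] (p q t : X → ℝ) (T : ℝ)
    (hp0 : ∀ x, 0 ≤ p x) (hp1 : ∑ x, p x = 1)
    (hq : ∀ x, 0 < p x → 0 < q x) (ht : ∀ x, 0 < p x → 0 < t x)
    (hT1 : 1 ≤ T)
    (hsum : ∑ x ∈ Finset.univ.filter (fun x => 0 < p x), t x ≤ T) :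
    ∑ x ∈ Finset.univ.filter (fun x => 0 < p x), p x * Real.logb 2 (t x / q x)
      ≤ (∑ x, p x * Real.logb 2 (p x / q x)) + Real.logb 2 T := by
  classical
  set F := Finset.univ.filter (fun x => 0 < p x) with hF
  have hpF : ∀ x, x ∉ F → p x = 0 := by
    intro x hx
    rcases (hp0 x).lt_or_eq with h | h
    · exact absurd (by simp [hF, h]) hx
    · exact h.symm
  have hFmem : ∀ x ∈ F, 0 < p x := fun x hx => by
    simpa [hF] using hx
  have hUF : ∑ x, p x * Real.logb 2 (p x / q x) = ∑ x ∈ F, p x * Real.logb 2 (p x / q x) := by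
    rw [← Finset.sum_subset F.subset_univ]
    intro x _ hx
    rw [hpF x hx, zero_mul]
  rw [hUF]
  rcases F.eq_empty_or_nonempty with hFe | hFne
  · rw [hFe]
    simp only [Finset.sum_empty, zero_add]
    exact Real.logb_nonneg (by norm_num) hT1
  have hF1 : ∑ x ∈ F, p x = 1 := by
    rw [← hp1, Finset.sum_subset F.subset_univ]
    intro x _ hx
    exact hpF x hx
  -- reduce to single-log form
  have hcongr : ∀ x ∈ F, p x * Real.logb 2 (t x / q x) - p x * Real.logb 2 (p x / q x)
      = p x * Real.logb 2 (t x / p x) := by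
    intro x hx
    have hpx := hFmem x hx
    have hqx := hq x hpx
    have htx := ht x hpx
    rw [← mul_sub, Real.logb_div (ne_of_gt htx) (ne_of_gt hqx),
      Real.logb_div (ne_of_gt hpx) (ne_of_gt hqx),
      Real.logb_div (ne_of_gt htx) (ne_of_gt hpx)]
    ring
  rw [← sub_le_iff_le_add', ← Finset.sum_sub_distrib, Finset.sum_congr rfl hcongr]
  -- Jensen
  have hjen := (strictConcaveOn_log_Ioi.concaveOn).le_map_sum
    (t := F) (w := p) (p := fun x => t x / p x)
    (fun x hx => hp0 x) hF1
    (fun x hx => Set.mem_Ioi.mpr (div_pos (ht x (hFmem x hx)) (hFmem x hx)))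
  have hsum' : ∑ x ∈ F, p x • (t x / p x) = ∑ x ∈ F, t x := by
    refine Finset.sum_congr rfl fun x hx => ?_
    rw [smul_eq_mul, mul_div_cancel₀ _ (ne_of_gt (hFmem x hx))]
  rw [hsum'] at hjen
  have htpos : 0 < ∑ x ∈ F, t x :=
    Finset.sum_pos (fun x hx => ht x (hFmem x hx)) hFne
  have hlog : ∑ x ∈ F, p x * Real.log (t x / p x) ≤ Real.log T := by
    refine le_trans ?_ (Real.log_le_log htpos hsum)
    simpa [smul_eq_mul] using hjen
  have h2 : (0:ℝ) < Real.log 2 := Real.log_pos (by norm_num)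
  calc ∑ x ∈ F, p x * Real.logb 2 (t x / p x)
      = (∑ x ∈ F, p x * Real.log (t x / p x)) / Real.log 2 := by
        rw [Finset.sum_div]
        refine Finset.sum_congr rfl fun x hx => ?_
        rw [Real.logb, mul_div_assoc]
    _ ≤ Real.log T / Real.log 2 := by gcongr
    _ = Real.logb 2 T := by rw [Real.logb]

end LogIneq

section ERealHelpers

lemma ereal_mul_ne_bot {r : ℝ} (hr : 0 ≤ r) {a : EReal} (ha : a ≠ ⊥) :
    (r : EReal) * a ≠ ⊥ := by
  induction a using EReal.rec with
  | bot => exact absurd rfl ha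
  | coe x => rw [← EReal.coe_mul]; exact EReal.coe_ne_bot _
  | top =>
    rcases hr.lt_or_eq with h | h
    · rw [EReal.coe_mul_top_of_pos h]; exact (by simp)
    · rw [← h]; simp [EReal.zero_mul]

lemma ereal_sum_ne_bot {X : Type} [Fintype X] (s : Finset X) (f : X → EReal)
    (hf : ∀ x ∈ s, f x ≠ ⊥) : ∑ x ∈ s, f x ≠ ⊥ := by
  classical
  induction s using Finset.induction_on with
  | empty => simp
  | @insert x s' hx ih =>
    rw [Finset.sum_insert hx]
    intro hcon
    rcases EReal.add_eq_bot_iff.mp hcon with h | h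
    · exact hf x (Finset.mem_insert_self _ _) h
    · exact ih (fun y hy => hf y (Finset.mem_insert_of_mem hy)) h

lemma ereal_distrib {r : ℝ} (hr : 0 < r) {a : EReal} (ha : a ≠ ⊥) (b : ℝ) :
    (r : EReal) * (a + (b : EReal)) = (r : EReal) * a + (r : EReal) * (b : EReal) := by
  induction a using EReal.rec with
  | bot => exact absurd rfl ha
  | coe x =>
    rw [← EReal.coe_add, ← EReal.coe_mul, ← EReal.coe_mul, ← EReal.coe_mul, ← EReal.coe_add,
      mul_add]
  | top =>
    rw [EReal.top_add_coe, EReal.coe_mul_top_of_pos hr, ← EReal.coe_mul, EReal.top_add_coe]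

lemma ereal_coe_sum {X : Type} [Fintype X] (s : Finset X) (f : X → ℝ) :
    ((∑ x ∈ s, f x : ℝ) : EReal) = ∑ x ∈ s, ((f x : ℝ) : EReal) := by
  classical
  induction s using Finset.induction_on with
  | empty => simp
  | @insert x s' hx ih =>
    rw [Finset.sum_insert hx, Finset.sum_insert hx, EReal.coe_add, ih]

end ERealHelpers

/-- Selective PPT monotonicity of generalized Rains relative entropies:
if `𝒟`, taking values in `ℝ ∪ {+∞}`, satisfies the data-processing inequality under all
CPTP maps and the direct-sum inequality for classical–quantum operators, then
`𝐑(ρ) := inf_{states σ} [𝒟(ρ‖σ) + log₂‖(id⊗T)(σ)‖₁]` satisfies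
`𝐑(ρ) ≥ ∑_{x : p(x) > 0} p(x) 𝐑(ρ_x)` for every selective PPT operation `{P_x}`,
where `p(x) = Tr[P_x(ρ)]` and `ρ_x = P_x(ρ)/p(x)`. -/
theorem generalizedRains_selective_PPT_monotone {A B A' B' X : Type}
    [Fintype A] [DecidableEq A] [Fintype B] [DecidableEq B]
    [Fintype A'] [DecidableEq A'] [Fintype B'] [DecidableEq B'] [Fintype X]
    (𝒟 : ∀ (k : Type) [Fintype k] [DecidableEq k], Matrix k k ℂ → Matrix k k ℂ → EReal)
    (hne : ∀ (k : Type) [Fintype k] [DecidableEq k] (ω τ : Matrix k k ℂ),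
      IsState ω → τ.PosSemidef → 𝒟 k ω τ ≠ ⊥)
    (hDP : ∀ (k l : Type) [Fintype k] [DecidableEq k] [Fintype l] [DecidableEq l]
      (N : Matrix k k ℂ →ₗ[ℂ] Matrix l l ℂ), IsCP N → IsTP N →
      ∀ (ω τ : Matrix k k ℂ), IsState ω → τ.PosSemidef →
        𝒟 k ω τ ≥ 𝒟 l (N ω) (N τ))
    (hDS : ∀ (Y C : Type) [Fintype Y] [DecidableEq Y] [Fintype C] [DecidableEq C]
      (p q : Y → ℝ) (κ lam : Y → Matrix C C ℂ),
      IsProb p → (∀ y, IsState (κ y)) → (∀ y, 0 ≤ q y) → (∀ y, (lam y).PosSemidef) →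
        𝒟 (Y × C) (cqOp p κ) (cqOp q lam) ≥
          cRelEnt p q + ∑ y, (p y : EReal) * 𝒟 C (κ y) (lam y))
    (ρ : Matrix (A × B) (A × B) ℂ) (hρ : IsState ρ)
    (P : X → (Matrix (A × B) (A × B) ℂ →ₗ[ℂ] Matrix (A' × B') (A' × B') ℂ))
    (hP : IsSelectivePPT P) :
    (⨅ σ : {σ : Matrix (A × B) (A × B) ℂ // IsState σ},
        (𝒟 (A × B) ρ σ.1 + ((Real.logb 2 (traceNorm (ptrans σ.1)) : ℝ) : EReal)))
      ≥ ∑ x ∈ Finset.univ.filter (fun x => 0 < ((P x) ρ).trace.re),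
          (((P x) ρ).trace.re : EReal) *
            (⨅ σ : {σ : Matrix (A' × B') (A' × B') ℂ // IsState σ},
              (𝒟 (A' × B') (((((P x) ρ).trace.re)⁻¹ : ℝ) • (P x) ρ) σ.1 +
                ((Real.logb 2 (traceNorm (ptrans σ.1)) : ℝ) : EReal))) := by
  classical
  obtain ⟨hCP, hCPpt, hTP⟩ := hP
  -- the output system is nonempty
  have hne' : Nonempty (A' × B') := by
    by_contra hcon
    have hz : ∀ x, ((P x) ρ).trace = 0 := fun x => by
      rw [Matrix.trace]
      have he : (Finset.univ : Finset (A' × B')) = ∅ :=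
        Finset.univ_eq_empty_iff.mpr (not_nonempty_iff.mp hcon)
      rw [he, Finset.sum_empty]
    have h1 := hTP ρ
    rw [hρ.2] at h1
    simp only [hz, Finset.sum_const_zero] at h1
    exact one_ne_zero h1.symm
  -- default state
  set σ0 : Matrix (A' × B') (A' × B') ℂ :=
    (((Fintype.card (A' × B') : ℝ))⁻¹ : ℝ) • (1 : Matrix (A' × B') (A' × B') ℂ) with hσ0def
  have hcard : (0:ℝ) < (Fintype.card (A' × B') : ℝ) := by
    have := Fintype.card_pos_iff.mpr hne'
    exact_mod_cast this
  have hσ0 : IsState σ0 := by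
    constructor
    · exact psd_smul_real Matrix.PosSemidef.one (by positivity)
    · rw [hσ0def, Matrix.trace_smul, Matrix.trace_one, Complex.real_smul]
      rw [show ((Fintype.card (A' × B') : ℕ) : ℂ) = (((Fintype.card (A' × B') : ℝ)) : ℂ) by
        push_cast; ring]
      rw [← Complex.ofReal_mul, inv_mul_cancel₀ (ne_of_gt hcard), Complex.ofReal_one]
  refine le_iInf fun σs => ?_
  obtain ⟨σ, hσ⟩ := σs
  set p : X → ℝ := fun x => ((P x) ρ).trace.re with hpdef
  set q : X → ℝ := fun x => ((P x) σ).trace.re with hqdef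
  have hPρ : ∀ x, ((P x) ρ).PosSemidef := fun x => (hCP x).psd_map hρ.1
  have hPσ : ∀ x, ((P x) σ).PosSemidef := fun x => (hCP x).psd_map hσ.1
  have hp0 : ∀ x, 0 ≤ p x := fun x => (psd_trace_re (hPρ x)).2
  have hq0 : ∀ x, 0 ≤ q x := fun x => (psd_trace_re (hPσ x)).2
  have hptr : ∀ x, ((P x) ρ).trace = ((p x : ℝ) : ℂ) := fun x => (psd_trace_re (hPρ x)).1
  have hqtr : ∀ x, ((P x) σ).trace = ((q x : ℝ) : ℂ) := fun x => (psd_trace_re (hPσ x)).1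
  have hp1 : ∑ x, p x = 1 := by
    have h1 := hTP ρ
    rw [hρ.2] at h1
    have h2 := congrArg Complex.re h1
    rw [Complex.re_sum] at h2
    simpa using h2
  set κ : X → Matrix (A' × B') (A' × B') ℂ :=
    fun x => if 0 < p x then (((p x)⁻¹ : ℝ)) • (P x) ρ else σ0 with hκdef
  set lam : X → Matrix (A' × B') (A' × B') ℂ :=
    fun x => if 0 < q x then (((q x)⁻¹ : ℝ)) • (P x) σ else σ0 with hlamdef
  have hκ : ∀ x, IsState (κ x) := by
    intro x
    rw [hκdef]
    by_cases h : 0 < p x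
    · simp only [if_pos h]
      refine ⟨psd_smul_real (hPρ x) (inv_nonneg.mpr (hp0 x)), ?_⟩
      rw [Matrix.trace_smul, hptr x, Complex.real_smul, ← Complex.ofReal_mul,
        inv_mul_cancel₀ (ne_of_gt h), Complex.ofReal_one]
    · simp only [if_neg h]; exact hσ0
  have hlam : ∀ x, 0 < q x → IsState (lam x) := by
    intro x h
    rw [hlamdef]
    simp only [if_pos h]
    refine ⟨psd_smul_real (hPσ x) (inv_nonneg.mpr (hq0 x)), ?_⟩
    rw [Matrix.trace_smul, hqtr x, Complex.real_smul, ← Complex.ofReal_mul,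
      inv_mul_cancel₀ (ne_of_gt h), Complex.ofReal_one]
  have hlampsd : ∀ x, (lam x).PosSemidef := by
    intro x
    rw [hlamdef]
    by_cases h : 0 < q x
    · simp only [if_pos h]
      exact psd_smul_real (hPσ x) (inv_nonneg.mpr (hq0 x))
    · simp only [if_neg h]; exact hσ0.1
  have hNρ : Nmap P ρ = cqOp p κ := by
    ext ⟨x, c⟩ ⟨y, d⟩
    rw [Nmap_apply, cqOp]
    simp only [Matrix.of_apply]
    by_cases h : x = y
    · subst h
      simp only [eq_self_iff_true, if_true]
      rw [hκdef]
      by_cases hx : 0 < p x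
      · simp only [if_pos hx, Matrix.smul_apply, Complex.real_smul]
        rw [← mul_assoc, ← Complex.ofReal_mul, mul_inv_cancel₀ (ne_of_gt hx),
          Complex.ofReal_one, one_mul]
      · have hpz : p x = 0 := le_antisymm (not_lt.mp hx) (hp0 x)
        have hz : (P x) ρ = 0 := psd_eq_zero_of_trace_re (hPρ x) hpz
        rw [hz, hpz]
        simp
    · simp [h]
  have hNσ : Nmap P σ = cqOp q lam := by
    ext ⟨x, c⟩ ⟨y, d⟩
    rw [Nmap_apply, cqOp]
    simp only [Matrix.of_apply]
    by_cases h : x = y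
    · subst h
      simp only [eq_self_iff_true, if_true]
      rw [hlamdef]
      by_cases hx : 0 < q x
      · simp only [if_pos hx, Matrix.smul_apply, Complex.real_smul]
        rw [← mul_assoc, ← Complex.ofReal_mul, mul_inv_cancel₀ (ne_of_gt hx),
          Complex.ofReal_one, one_mul]
      · have hqz : q x = 0 := le_antisymm (not_lt.mp hx) (hq0 x)
        have hz : (P x) σ = 0 := psd_eq_zero_of_trace_re (hPσ x) hqz
        rw [hz, hqz]
        simp
    · simp [h]
  have hNcp : IsCP (Nmap P) := Nmap_isCP hCP
  have hNtp : IsTP (Nmap P) := fun ω => by rw [Nmap_trace]; exact hTP ω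
  have hDP1 := hDP _ _ (Nmap P) hNcp hNtp ρ σ hρ hσ.1
  rw [hNρ, hNσ] at hDP1
  have hDS1 := hDS X (A' × B') p q κ lam ⟨hp0, hp1⟩ hκ hq0 hlampsd
  have hchain : cRelEnt p q + ∑ y, (p y : EReal) * 𝒟 (A' × B') (κ y) (lam y)
      ≤ 𝒟 (A × B) ρ σ := le_trans hDS1 hDP1
  have hSne : (∑ y, (p y : EReal) * 𝒟 (A' × B') (κ y) (lam y)) ≠ ⊥ :=
    ereal_sum_ne_bot _ _ fun y _ =>
      ereal_mul_ne_bot (hp0 y) (hne _ (κ y) (lam y) (hκ y) (hlampsd y))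
  by_cases hqp : ∀ x, 0 < p x → 0 < q x
  · -- main case
    set t : X → ℝ := fun x => traceNorm (ptrans ((P x) σ)) with htdef
    set F : Finset X := Finset.univ.filter (fun x => 0 < p x) with hFdef
    have hFmem : ∀ x ∈ F, 0 < p x := fun x hx => by simpa [hFdef] using hx
    have hherm : ∀ x, (ptrans ((P x) σ)).IsHermitian := fun x => ptrans_isHermitian (hPσ x).1
    have hqt : ∀ x, q x ≤ t x := fun x => by
      have h1 := traceNorm_herm_ge_trace_re (hherm x)
      rwa [ptrans_trace] at h1
    have htpos : ∀ x, 0 < p x → 0 < t x := fun x hx => lt_of_lt_of_le (hqp x hx) (hqt x)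
    have hT1 : 1 ≤ traceNorm (ptrans σ) := by
      have h1 := traceNorm_herm_ge_trace_re (ptrans_isHermitian hσ.1.1)
      rw [ptrans_trace] at h1
      have h2 : σ.trace.re = 1 := by rw [hσ.2]; simp
      linarith
    have hsumt : ∑ x ∈ F, t x ≤ traceNorm (ptrans σ) := by
      obtain ⟨S0, T0, hS0, hT0, hdec, htn⟩ := exists_psd_decomp (ptrans_isHermitian hσ.1.1)
      have hps : ∀ x, (ptrans ((P x) (ptrans S0))).PosSemidef := fun x => (hCPpt x).psd_map hS0
      have hpt : ∀ x, (ptrans ((P x) (ptrans T0))).PosSemidef := fun x => (hCPpt x).psd_map hT0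
      have hσd : σ = ptrans S0 - ptrans T0 := by
        have h1 := congrArg ptrans hdec
        rw [ptrans_ptrans] at h1
        rw [h1]
        ext ⟨i, k⟩ ⟨j, l⟩
        rfl
      have hsub : ∀ x, ptrans ((P x) σ)
          = ptrans ((P x) (ptrans S0)) - ptrans ((P x) (ptrans T0)) := by
        intro x
        rw [hσd, map_sub]
        ext ⟨i, k⟩ ⟨j, l⟩
        rfl
      have hxb : ∀ x, t x ≤ (ptrans ((P x) (ptrans S0))).trace.re
          + (ptrans ((P x) (ptrans T0))).trace.re := by
        intro x
        rw [htdef]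
        simp only []
        rw [hsub x]
        exact traceNorm_sub_psd_le (hps x) (hpt x)
      have hsums : (∑ x, (ptrans ((P x) (ptrans S0))).trace.re) = S0.trace.re := by
        have h1 := hTP (ptrans S0)
        have h2 := congrArg Complex.re h1
        rw [Complex.re_sum] at h2
        calc ∑ x, (ptrans ((P x) (ptrans S0))).trace.re
            = ∑ x, ((P x) (ptrans S0)).trace.re := by
              exact Finset.sum_congr rfl fun x _ => by rw [ptrans_trace]
          _ = (ptrans S0).trace.re := h2
          _ = S0.trace.re := by rw [ptrans_trace]
      have hsumtt : (∑ x, (ptrans ((P x) (ptrans T0))).trace.re) = T0.trace.re := by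
        have h1 := hTP (ptrans T0)
        have h2 := congrArg Complex.re h1
        rw [Complex.re_sum] at h2
        calc ∑ x, (ptrans ((P x) (ptrans T0))).trace.re
            = ∑ x, ((P x) (ptrans T0)).trace.re := by
              exact Finset.sum_congr rfl fun x _ => by rw [ptrans_trace]
          _ = (ptrans T0).trace.re := h2
          _ = T0.trace.re := by rw [ptrans_trace]
      calc ∑ x ∈ F, t x
          ≤ ∑ x ∈ F, ((ptrans ((P x) (ptrans S0))).trace.re
              + (ptrans ((P x) (ptrans T0))).trace.re) :=
            Finset.sum_le_sum fun x _ => hxb x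
        _ ≤ ∑ x, ((ptrans ((P x) (ptrans S0))).trace.re
              + (ptrans ((P x) (ptrans T0))).trace.re) :=
            Finset.sum_le_sum_of_subset_of_nonneg F.subset_univ fun x _ _ =>
              add_nonneg (psd_trace_re (hps x)).2 (psd_trace_re (hpt x)).2
        _ = S0.trace.re + T0.trace.re := by
            rw [Finset.sum_add_distrib, hsums, hsumtt]
        _ = traceNorm (ptrans σ) := htn.symm
    -- per x bound on the infimum
    have hinf : ∀ x ∈ F,
        (⨅ σ' : {σ' : Matrix (A' × B') (A' × B') ℂ // IsState σ'},
          (𝒟 (A' × B') ((((p x)⁻¹ : ℝ)) • (P x) ρ) σ'.1 +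
            ((Real.logb 2 (traceNorm (ptrans σ'.1)) : ℝ) : EReal)))
        ≤ 𝒟 (A' × B') (κ x) (lam x) + ((Real.logb 2 (t x / q x) : ℝ) : EReal) := by
      intro x hxF
      have hxp : 0 < p x := hFmem x hxF
      have hxq : 0 < q x := hqp x hxp
      have h1 : κ x = (((p x)⁻¹ : ℝ)) • (P x) ρ := by rw [hκdef]; simp only [if_pos hxp]
      have h2 : traceNorm (ptrans (lam x)) = t x / q x := by
        rw [hlamdef]
        simp only [if_pos hxq]
        have hpt2 : ptrans ((((q x)⁻¹ : ℝ)) • (P x) σ)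
            = (((q x)⁻¹ : ℝ)) • ptrans ((P x) σ) := by
          ext ⟨i, k⟩ ⟨j, l⟩
          rfl
        rw [hpt2, traceNorm_smul_nonneg (inv_nonneg.mpr (hq0 x)), htdef, div_eq_inv_mul]
      calc (⨅ σ' : {σ' : Matrix (A' × B') (A' × B') ℂ // IsState σ'},
            (𝒟 (A' × B') ((((p x)⁻¹ : ℝ)) • (P x) ρ) σ'.1 +
              ((Real.logb 2 (traceNorm (ptrans σ'.1)) : ℝ) : EReal)))
          ≤ 𝒟 (A' × B') ((((p x)⁻¹ : ℝ)) • (P x) ρ) (lam x) +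
              ((Real.logb 2 (traceNorm (ptrans (lam x))) : ℝ) : EReal) :=
            iInf_le _ (⟨lam x, hlam x hxq⟩ : {σ' : Matrix (A' × B') (A' × B') ℂ // IsState σ'})
        _ = 𝒟 (A' × B') (κ x) (lam x) + ((Real.logb 2 (t x / q x) : ℝ) : EReal) := by
            rw [h1, h2]
    have hcrel : cRelEnt p q = ((∑ x, p x * Real.logb 2 (p x / q x) : ℝ) : EReal) := by
      rw [cRelEnt, if_pos]
      intro x hx
      exact ne_of_gt (hqp x (lt_of_le_of_ne (hp0 x) (Ne.symm hx)))
    have hES : (∑ x ∈ F, (p x : EReal) * 𝒟 (A' × B') (κ x) (lam x))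
        = ∑ x, (p x : EReal) * 𝒟 (A' × B') (κ x) (lam x) := by
      refine Finset.sum_subset F.subset_univ fun x _ hx => ?_
      have hpz : p x = 0 := le_antisymm (not_lt.mp (by simpa [hFdef] using hx)) (hp0 x)
      rw [hpz]
      rw [show ((0:ℝ) : EReal) = (0 : EReal) by norm_cast, EReal.zero_mul]
    calc ∑ x ∈ F, (p x : EReal) *
          (⨅ σ' : {σ' : Matrix (A' × B') (A' × B') ℂ // IsState σ'},
            (𝒟 (A' × B') ((((p x)⁻¹ : ℝ)) • (P x) ρ) σ'.1 +
              ((Real.logb 2 (traceNorm (ptrans σ'.1)) : ℝ) : EReal)))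
        ≤ ∑ x ∈ F, (p x : EReal) *
            (𝒟 (A' × B') (κ x) (lam x) + ((Real.logb 2 (t x / q x) : ℝ) : EReal)) :=
          Finset.sum_le_sum fun x hx =>
            mul_le_mul_of_nonneg_left (hinf x hx) (EReal.coe_nonneg.mpr (hp0 x))
      _ = ∑ x ∈ F, ((p x : EReal) * 𝒟 (A' × B') (κ x) (lam x) +
            ((p x * Real.logb 2 (t x / q x) : ℝ) : EReal)) := by
          refine Finset.sum_congr rfl fun x hx => ?_
          rw [ereal_distrib (hFmem x hx) (hne _ (κ x) (lam x) (hκ x) (hlampsd x)),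
            EReal.coe_mul]
      _ = (∑ x ∈ F, (p x : EReal) * 𝒟 (A' × B') (κ x) (lam x)) +
            ((∑ x ∈ F, p x * Real.logb 2 (t x / q x) : ℝ) : EReal) := by
          rw [Finset.sum_add_distrib, ereal_coe_sum]
      _ ≤ (∑ x ∈ F, (p x : EReal) * 𝒟 (A' × B') (κ x) (lam x)) +
            (((∑ x, p x * Real.logb 2 (p x / q x)) +
              Real.logb 2 (traceNorm (ptrans σ)) : ℝ) : EReal) := by
          refine add_le_add_right (EReal.coe_le_coe_iff.mpr ?_) _
          exact log_sum_ineq p q t _ hp0 hp1 hqp htpos hT1 hsumt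
      _ = (cRelEnt p q + ∑ x, (p x : EReal) * 𝒟 (A' × B') (κ x) (lam x)) +
            ((Real.logb 2 (traceNorm (ptrans σ)) : ℝ) : EReal) := by
          rw [EReal.coe_add, ← add_assoc, hES, hcrel, add_comm
            (∑ x, (p x : EReal) * 𝒟 (A' × B') (κ x) (lam x))]
      _ ≤ 𝒟 (A × B) ρ σ + ((Real.logb 2 (traceNorm (ptrans σ)) : ℝ) : EReal) :=
          add_le_add_left hchain _
  · -- degenerate case : relative entropy of flags is infinite
    push_neg at hqp
    obtain ⟨x0, hx0p, hx0q⟩ := hqp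
    have hqz : q x0 = 0 := le_antisymm hx0q (hq0 x0)
    have hcq : cRelEnt p q = ⊤ := by
      rw [cRelEnt, if_neg]
      push_neg
      exact ⟨x0, ne_of_gt hx0p, hqz⟩
    have htop : 𝒟 (A × B) ρ σ = ⊤ := by
      refine top_le_iff.mp ?_
      calc (⊤ : EReal) = cRelEnt p q + ∑ y, (p y : EReal) * 𝒟 (A' × B') (κ y) (lam y) := by
            rw [hcq, EReal.top_add_of_ne_bot hSne]
        _ ≤ 𝒟 (A × B) ρ σ := hchain
    rw [htop, EReal.top_add_coe]
    exact le_top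

end RainsPaper
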